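/- arXiv:1312.4987 — 2 statements merged into one kernel-verified Lean document; each statement's English description precedes it below -/
import Mathlib

section
/- If f : X → ℂ is a uniformly continuous eigenfunction of a continuous ℝ^d-action T on a metric space X with eigenvalue α ∈ ℝ^d (i.e., f(T_y x) = exp(2πi α·y) f(x) for all x, y), and there exist points p, q ∈ X, vectors x, y ∈ ℝ^d such that dist(T_{ty} p, T_{ty} q) → 0 as t → ∞ and dist(T_{ty} p, T_{ty}(T_{-x} q)) → 0 as t → -∞, then α · x ∈ ℤ. -/
open Filter Real

/-- If `f` is a uniformly continuous eigenfunction (bounded away from zero)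
of a continuous `ℝ^d`-action `T` with eigenvalue `α`, and the space has a
fracture in the direction `x` witnessed by points `p, q` and direction `y`,
then `α · x` is an integer. -/
theorem eigenvalue_integral_on_fracture
    {d : ℕ} {X : Type*} [MetricSpace X]
    (T : EuclideanSpace ℝ (Fin d) → X → X)
    (h_act : ∀ a b z, T a (T b z) = T (a + b) z)
    (f : X → ℂ) (hf_uc : UniformContinuous f)
    (hf_ne : ∃ c > 0, ∀ z, c ≤ ‖f z‖)
    (α : EuclideanSpace ℝ (Fin d))
    (h_eig : ∀ (y : EuclideanSpace ℝ (Fin d)) (z : X),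
      f (T y z) = Complex.exp (2 * Real.pi * Complex.I * (inner ℝ α y : ℝ)) * f z)
    (p q : X) (x y : EuclideanSpace ℝ (Fin d))
    (h_plus : Tendsto (fun t : ℝ => dist (T (t • y) p) (T (t • y) q)) atTop (nhds 0))
    (h_minus : Tendsto (fun t : ℝ => dist (T (t • y) p) (T (t • y) (T (-x) q))) atBot (nhds 0)) :
    ∃ m : ℤ, (inner ℝ α x : ℝ) = m := by
  have hnorm : ∀ r : ℝ, ‖Complex.exp (2 * Real.pi * Complex.I * (r : ℂ))‖ = 1 := by
    intro r
    rw [Complex.norm_exp]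
    have : (2 * Real.pi * Complex.I * (r : ℂ)).re = 0 := by simp
    rw [this, Real.exp_zero]
  -- generic key lemma
  have key : ∀ (a b : X) (l : Filter ℝ), l.NeBot →
      Tendsto (fun t : ℝ => dist (T (t • y) a) (T (t • y) b)) l (nhds 0) → f a = f b := by
    intro a b l hl hlim
    apply eq_of_forall_dist_le
    intro ε hε
    rw [Metric.uniformContinuous_iff] at hf_uc
    obtain ⟨δ, hδ, hδ'⟩ := hf_uc ε hε
    have h1 : ∀ᶠ t in l, dist (T (t • y) a) (T (t • y) b) < δ := by
      have := hlim (Metric.ball_mem_nhds 0 hδ)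
      filter_upwards [this] with t ht
      simpa [Real.dist_eq, abs_of_nonneg dist_nonneg] using ht
    obtain ⟨t, ht⟩ := h1.exists
    have h2 := hδ' ht
    rw [dist_eq_norm, h_eig, h_eig, ← mul_sub, norm_mul, hnorm, one_mul,
      ← dist_eq_norm] at h2
    exact h2.le
  have hpq : f p = f q := key p q atTop ⟨atTop_neBot.ne'⟩ h_plus
  have hpq' : f p = f (T (-x) q) := key p (T (-x) q) atBot ⟨atBot_neBot.ne'⟩ h_minus
  have hq_ne : f q ≠ 0 := by
    obtain ⟨c, hc, hfc⟩ := hf_ne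
    intro h
    have := hfc q
    rw [h, norm_zero] at this
    linarith
  set r : ℝ := inner ℝ α x with hr
  have hinner : (inner ℝ α (-x) : ℝ) = -r := by rw [hr, inner_neg_right]
  have hexp : Complex.exp (2 * Real.pi * Complex.I * ((-r : ℝ) : ℂ)) = 1 := by
    have h3 : f q = Complex.exp (2 * Real.pi * Complex.I * ((-r : ℝ) : ℂ)) * f q := by
      have h3' := hpq'
      rw [hpq, h_eig, hinner] at h3'
      exact h3'
    have h4 : (Complex.exp (2 * Real.pi * Complex.I * ((-r : ℝ) : ℂ)) - 1) * f q = 0 := by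
      rw [sub_mul, one_mul, ← h3]; ring
    rcases mul_eq_zero.mp h4 with h5 | h5
    · exact sub_eq_zero.mp h5
    · exact absurd h5 hq_ne
  rw [Complex.exp_eq_one_iff] at hexp
  obtain ⟨n, hn⟩ := hexp
  refine ⟨-n, ?_⟩
  have h2pi : (2 * Real.pi * Complex.I : ℂ) ≠ 0 := by
    simp [Complex.I_ne_zero, Real.pi_ne_zero]
  have : ((-r : ℝ) : ℂ) = (n : ℂ) := by
    apply mul_left_cancel₀ h2pi
    rw [hn]; ring
  have : (-r : ℝ) = (n : ℝ) := by exact_mod_cast this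
  push_cast
  linarith
end

section
/- The set { (2^j / 3^k) · y : j, k ∈ ℕ, (2^j/3^k)·y ∈ [1,3] } is dense in the interval [1,3], for any fixed y ∈ [1,3]. -/
open Real Set

set_option maxHeartbeats 1000000

private def tileS : Set ℝ := {s | ∃ j k : ℕ, s = j * Real.log 2 - k * Real.log 3}

private lemma tileS_log2 : (0:ℝ) < Real.log 2 := Real.log_pos (by norm_num)
private lemma tileS_log3 : (0:ℝ) < Real.log 3 := Real.log_pos (by norm_num)

private lemma tileS_pow_ne (N M : ℕ) (hN : 0 < N) : (2:ℝ)^N ≠ 3^M := by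
  intro h
  have h' : (2^N : ℕ) = 3^M := by exact_mod_cast h
  have h2 : 2 ∣ 2^N := dvd_pow_self 2 hN.ne'
  rw [h'] at h2
  have := Nat.Prime.dvd_of_dvd_pow (p := 2) Nat.prime_two h2
  norm_num at this

private lemma tileS_nat_no_rel (N M : ℕ) (hN : 0 < N)
    (h : (N:ℝ) * Real.log 2 = (M:ℝ) * Real.log 3) : False := by
  have h2 : Real.log ((2:ℝ)^N) = Real.log ((3:ℝ)^M) := by
    rw [Real.log_pow, Real.log_pow]; exact_mod_cast h
  have h3 : (2:ℝ)^N = 3^M := by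
    have e2 : (0:ℝ) < 2^N := by positivity
    have e3 : (0:ℝ) < 3^M := by positivity
    calc (2:ℝ)^N = Real.exp (Real.log ((2:ℝ)^N)) := (Real.exp_log e2).symm
    _ = Real.exp (Real.log ((3:ℝ)^M)) := by rw [h2]
    _ = 3^M := Real.exp_log e3
  exact tileS_pow_ne N M hN h3

private lemma tileS_int_no_rel (n m : ℤ)
    (h : (n:ℝ) * Real.log 2 = (m:ℝ) * Real.log 3) : n = 0 := by
  by_contra hne
  rcases lt_or_gt_of_ne hne with hn | hn
  · have hm : (m:ℝ) * Real.log 3 < 0 := by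
      rw [← h]; exact mul_neg_of_neg_of_pos (by exact_mod_cast hn) tileS_log2
    have hm0 : m < 0 := by
      by_contra hm0
      push_neg at hm0
      nlinarith [tileS_log3, (by exact_mod_cast hm0 : (0:ℝ) ≤ (m:ℝ))]
    refine tileS_nat_no_rel (-n).toNat (-m).toNat (by omega) ?_
    rw [show (((-n).toNat : ℕ) : ℝ) = ((-n : ℤ) : ℝ) by
          exact_mod_cast congrArg (fun z : ℤ => (z : ℝ)) (Int.toNat_of_nonneg (by omega)),
        show (((-m).toNat : ℕ) : ℝ) = ((-m : ℤ) : ℝ) by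
          exact_mod_cast congrArg (fun z : ℤ => (z : ℝ)) (Int.toNat_of_nonneg (by omega))]
    push_cast
    linarith [h]
  · have hm : (0:ℝ) < (m:ℝ) * Real.log 3 := by
      rw [← h]; exact mul_pos (by exact_mod_cast hn) tileS_log2
    have hm0 : 0 < m := by
      by_contra hm0
      push_neg at hm0
      nlinarith [tileS_log3, (by exact_mod_cast hm0 : (m:ℝ) ≤ 0)]
    refine tileS_nat_no_rel n.toNat m.toNat (by omega) ?_
    rw [show ((n.toNat : ℕ) : ℝ) = ((n : ℤ) : ℝ) by
          exact_mod_cast congrArg (fun z : ℤ => (z : ℝ)) (Int.toNat_of_nonneg hn.le),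
        show ((m.toNat : ℕ) : ℝ) = ((m : ℤ) : ℝ) by
          exact_mod_cast congrArg (fun z : ℤ => (z : ℝ)) (Int.toNat_of_nonneg hm0.le)]
    exact h

private lemma tileS_subgroup_small (ε : ℝ) (hε : 0 < ε) :
    ∃ m n : ℤ, 0 < (m:ℝ) * Real.log 2 + (n:ℝ) * Real.log 3 ∧
      (m:ℝ) * Real.log 2 + (n:ℝ) * Real.log 3 < ε := by
  have hdense : Dense ((AddSubgroup.closure {Real.log 2, Real.log 3} : AddSubgroup ℝ) : Set ℝ) := by
    rcases (AddSubgroup.closure {Real.log 2, Real.log 3}).dense_or_cyclic with h | ⟨a, ha⟩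
    · exact h
    · exfalso
      have h2 : Real.log 2 ∈ AddSubgroup.closure ({Real.log 2, Real.log 3} : Set ℝ) :=
        AddSubgroup.subset_closure (by simp)
      have h3 : Real.log 3 ∈ AddSubgroup.closure ({Real.log 2, Real.log 3} : Set ℝ) :=
        AddSubgroup.subset_closure (by simp)
      rw [ha, AddSubgroup.mem_closure_singleton] at h2 h3
      obtain ⟨m, hm⟩ := h2
      obtain ⟨n, hn⟩ := h3
      simp only [zsmul_eq_mul] at hm hn
      have key : ((n:ℝ)) * Real.log 2 = (m:ℝ) * Real.log 3 := by
        rw [← hm, ← hn]; ring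
      have : n = 0 := tileS_int_no_rel n m key
      subst this
      simp only [Int.cast_zero, zero_mul] at hn
      exact absurd hn.symm tileS_log3.ne'
  obtain ⟨g, hg, hg0, hgε⟩ := hdense.exists_between hε
  rw [SetLike.mem_coe, AddSubgroup.mem_closure_pair] at hg
  obtain ⟨m, n, hmn⟩ := hg
  simp only [zsmul_eq_mul] at hmn
  exact ⟨m, n, by rw [hmn]; exact hg0, by rw [hmn]; exact hgε⟩

private lemma tileS_c_mem : (2 * Real.log 2 - Real.log 3) ∈ tileS :=
  ⟨2, 1, by push_cast; ring⟩

private lemma tileS_c_pos : 0 < 2 * Real.log 2 - Real.log 3 := by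
  have h : Real.log 3 < Real.log 4 := Real.log_lt_log (by norm_num) (by norm_num)
  have h4 : Real.log 4 = 2 * Real.log 2 := by
    rw [show (4:ℝ) = 2^2 by norm_num, Real.log_pow]; push_cast; ring
  linarith

private lemma tileS_d_mem : (3 * Real.log 2 - 2 * Real.log 3) ∈ tileS :=
  ⟨3, 2, by push_cast; ring⟩

private lemma tileS_d_neg : 3 * Real.log 2 - 2 * Real.log 3 < 0 := by
  have h : Real.log 8 < Real.log 9 := Real.log_lt_log (by norm_num) (by norm_num)
  have h8 : Real.log 8 = 3 * Real.log 2 := by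
    rw [show (8:ℝ) = 2^3 by norm_num, Real.log_pow]; push_cast; ring
  have h9 : Real.log 9 = 2 * Real.log 3 := by
    rw [show (9:ℝ) = 3^2 by norm_num, Real.log_pow]; push_cast; ring
  linarith

private lemma tileS_add {a b : ℝ} (ha : a ∈ tileS) (hb : b ∈ tileS) : a + b ∈ tileS := by
  obtain ⟨j1, k1, rfl⟩ := ha
  obtain ⟨j2, k2, rfl⟩ := hb
  exact ⟨j1 + j2, k1 + k2, by push_cast; ring⟩

private lemma tileS_nsmul {a : ℝ} (ha : a ∈ tileS) (n : ℕ) : (n : ℝ) * a ∈ tileS := by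
  obtain ⟨j, k, rfl⟩ := ha
  exact ⟨n * j, n * k, by push_cast; ring⟩

private lemma tileS_pos_of_neg {b ε : ℝ} (hε : 0 < ε) (hb : b ∈ tileS)
    (hb0 : b < 0) (hbε : -ε < b) : ∃ a ∈ tileS, 0 < a ∧ a < ε := by
  set c := 2 * Real.log 2 - Real.log 3 with hc
  have hcpos := tileS_c_pos
  have hex : ∃ N : ℕ, c + N * b < ε := by
    obtain ⟨N, hN⟩ := Archimedean.arch c (show (0:ℝ) < -b by linarith)
    refine ⟨N + 1, ?_⟩
    have h1 : c ≤ (N:ℝ) * (-b) := by simpa [nsmul_eq_mul] using hN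
    push_cast
    nlinarith
  classical
  have hN : c + (Nat.find hex : ℝ) * b < ε := Nat.find_spec hex
  have hmem : c + (Nat.find hex : ℝ) * b ∈ tileS :=
    tileS_add tileS_c_mem (tileS_nsmul hb _)
  refine ⟨c + (Nat.find hex : ℝ) * b, hmem, ?_, hN⟩
  rcases Nat.eq_zero_or_pos (Nat.find hex) with h0 | h0
  · rw [h0]; push_cast; linarith
  · have hprev : ¬ (c + ((Nat.find hex - 1 : ℕ) : ℝ) * b < ε) := Nat.find_min hex (by omega)
    push_neg at hprev
    have hcast : ((Nat.find hex - 1 : ℕ) : ℝ) = ((Nat.find hex : ℕ) : ℝ) - 1 := by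
      rw [Nat.cast_sub h0]; norm_num
    rw [hcast] at hprev
    nlinarith

private lemma tileS_neg_of_pos {a ε : ℝ} (hε : 0 < ε) (ha : a ∈ tileS)
    (ha0 : 0 < a) (haε : a < ε) : ∃ b ∈ tileS, -ε < b ∧ b < 0 := by
  set d := 3 * Real.log 2 - 2 * Real.log 3 with hd
  have hdneg := tileS_d_neg
  have hex : ∃ N : ℕ, -ε < d + N * a := by
    obtain ⟨N, hN⟩ := Archimedean.arch (-d) ha0
    refine ⟨N + 1, ?_⟩
    have h1 : -d ≤ (N:ℝ) * a := by simpa [nsmul_eq_mul] using hN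
    push_cast
    nlinarith
  classical
  have hN : -ε < d + (Nat.find hex : ℝ) * a := Nat.find_spec hex
  have hmem : d + (Nat.find hex : ℝ) * a ∈ tileS :=
    tileS_add tileS_d_mem (tileS_nsmul ha _)
  refine ⟨d + (Nat.find hex : ℝ) * a, hmem, hN, ?_⟩
  rcases Nat.eq_zero_or_pos (Nat.find hex) with h0 | h0
  · rw [h0]; push_cast; linarith
  · have hprev : ¬ (-ε < d + ((Nat.find hex - 1 : ℕ) : ℝ) * a) := Nat.find_min hex (by omega)
    push_neg at hprev
    have hcast : ((Nat.find hex - 1 : ℕ) : ℝ) = ((Nat.find hex : ℕ) : ℝ) - 1 := by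
      rw [Nat.cast_sub h0]; norm_num
    rw [hcast] at hprev
    nlinarith

private lemma tileS_small (ε : ℝ) (hε : 0 < ε) :
    (∃ a ∈ tileS, 0 < a ∧ a < ε) ∧ (∃ b ∈ tileS, -ε < b ∧ b < 0) := by
  set ε' := min ε (Real.log 2) with hε'def
  have hε'pos : 0 < ε' := lt_min hε tileS_log2
  have hε'le : ε' ≤ ε := min_le_left _ _
  have hε'log : ε' ≤ Real.log 2 := min_le_right _ _
  obtain ⟨m, n, hg0, hgε⟩ := tileS_subgroup_small ε' hε'pos
  have hcases : (0 ≤ m ∧ n ≤ 0) ∨ (m ≤ 0 ∧ 0 ≤ n) := by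
    by_contra hcon
    push_neg at hcon
    obtain ⟨h1, h2⟩ := hcon
    rcases le_or_gt 0 m with hm | hm
    · have hn : 0 < n := h1 hm
      have hn1 : (1:ℝ) ≤ (n:ℝ) := by exact_mod_cast hn
      have hm' : (0:ℝ) ≤ (m:ℝ) := by exact_mod_cast hm
      have hlt : Real.log 2 < Real.log 3 := Real.log_lt_log (by norm_num) (by norm_num)
      nlinarith [tileS_log2, tileS_log3]
    · have hn : n < 0 := h2 hm.le
      have hn' : (n:ℝ) ≤ 0 := by exact_mod_cast hn.le
      have hm' : (m:ℝ) < 0 := by exact_mod_cast hm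
      nlinarith [tileS_log2, tileS_log3]
  rcases hcases with ⟨hm, hn⟩ | ⟨hm, hn⟩
  · -- g itself is a small positive element of tileS
    have hgmem : (m:ℝ) * Real.log 2 + (n:ℝ) * Real.log 3 ∈ tileS := by
      refine ⟨m.toNat, (-n).toNat, ?_⟩
      rw [show ((m.toNat : ℕ) : ℝ) = ((m : ℤ) : ℝ) by
            exact_mod_cast congrArg (fun z : ℤ => (z : ℝ)) (Int.toNat_of_nonneg hm),
          show (((-n).toNat : ℕ) : ℝ) = ((-n : ℤ) : ℝ) by
            exact_mod_cast congrArg (fun z : ℤ => (z : ℝ)) (Int.toNat_of_nonneg (by omega))]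
      push_cast
      ring
    have hpos : ∃ a ∈ tileS, 0 < a ∧ a < ε :=
      ⟨_, hgmem, hg0, lt_of_lt_of_le hgε hε'le⟩
    obtain ⟨a, haS, ha0, haε⟩ := hpos
    exact ⟨⟨a, haS, ha0, haε⟩, tileS_neg_of_pos hε haS ha0 haε⟩
  · -- -g is a small negative element of tileS
    have hgmem : -((m:ℝ) * Real.log 2 + (n:ℝ) * Real.log 3) ∈ tileS := by
      refine ⟨(-m).toNat, n.toNat, ?_⟩
      rw [show (((-m).toNat : ℕ) : ℝ) = ((-m : ℤ) : ℝ) by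
            exact_mod_cast congrArg (fun z : ℤ => (z : ℝ)) (Int.toNat_of_nonneg (by omega)),
          show ((n.toNat : ℕ) : ℝ) = ((n : ℤ) : ℝ) by
            exact_mod_cast congrArg (fun z : ℤ => (z : ℝ)) (Int.toNat_of_nonneg hn)]
      push_cast
      ring
    have hneg : ∃ b ∈ tileS, -ε < b ∧ b < 0 :=
      ⟨_, hgmem, by linarith [lt_of_lt_of_le hgε hε'le], by linarith⟩
    obtain ⟨b, hbS, hbε, hb0⟩ := hneg
    exact ⟨tileS_pos_of_neg hε hbS hb0 hbε, ⟨b, hbS, hbε, hb0⟩⟩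

/-- `tileS` is an `ε`-net of `ℝ`. -/
private lemma tileS_approx (t ε : ℝ) (hε : 0 < ε) :
    ∃ s ∈ tileS, |s - t| < ε := by
  obtain ⟨⟨a, haS, ha0, haε⟩, ⟨b, hbS, hbε, hb0⟩⟩ := tileS_small ε hε
  -- choose L with L * b ≤ t
  set L : ℕ := ⌈t / b⌉₊ with hL
  have hLb : (L:ℝ) * b ≤ t := by
    have h1 : t / b ≤ (L:ℝ) := Nat.le_ceil _
    calc (L:ℝ) * b ≤ (t / b) * b := by nlinarith
    _ = t := div_mul_cancel₀ t hb0.ne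
  -- choose i with t ≤ L*b + i*a < t + a
  set u : ℝ := (t - (L:ℝ) * b) / a with hu
  have hu0 : 0 ≤ u := div_nonneg (by linarith) ha0.le
  set i : ℕ := ⌈u⌉₊ with hi
  have hiu : u ≤ (i:ℝ) := Nat.le_ceil _
  have hiu' : (i:ℝ) < u + 1 := Nat.ceil_lt_add_one hu0
  refine ⟨(L:ℝ) * b + (i:ℝ) * a, tileS_add (tileS_nsmul hbS L) (tileS_nsmul haS i), ?_⟩
  have h1 : t ≤ (L:ℝ) * b + (i:ℝ) * a := by
    have : u * a = t - (L:ℝ) * b := div_mul_cancel₀ _ ha0.ne'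
    nlinarith
  have h2 : (L:ℝ) * b + (i:ℝ) * a < t + a := by
    have : u * a = t - (L:ℝ) * b := div_mul_cancel₀ _ ha0.ne'
    nlinarith
  rw [abs_lt]
  constructor <;> linarith

/-- For any fixed `y ∈ [1,3]`, the set of numbers `(2^j / 3^k) * y` lying in `[1,3]`
is dense in `[1,3]`. -/
theorem dense_tile_lengths (y : ℝ) (hy : y ∈ Set.Icc (1 : ℝ) 3) :
    Set.Icc (1 : ℝ) 3 ⊆
      closure {z : ℝ | ∃ j k : ℕ, z = (2 ^ j / 3 ^ k) * y ∧ z ∈ Set.Icc (1 : ℝ) 3} := by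
  set T : Set ℝ := {z : ℝ | ∃ j k : ℕ, z = (2 ^ j / 3 ^ k) * y ∧ z ∈ Set.Icc (1 : ℝ) 3} with hT
  obtain ⟨hy1, hy3⟩ := hy
  have hypos : (0:ℝ) < y := by linarith
  have hmain : Ioo (1:ℝ) 3 ⊆ closure T := by
    intro x hx
    obtain ⟨hx1, hx3⟩ := hx
    have hxpos : (0:ℝ) < x := by linarith
    rw [Metric.mem_closure_iff]
    intro ε hε
    set ε₁ : ℝ := min ε (min (x - 1) (3 - x)) with hε₁def
    have hε₁pos : 0 < ε₁ := lt_min hε (lt_min (by linarith) (by linarith))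
    have hε₁ε : ε₁ ≤ ε := min_le_left _ _
    have hε₁x1 : ε₁ ≤ x - 1 := le_trans (min_le_right _ _) (min_le_left _ _)
    have hε₁x3 : ε₁ ≤ 3 - x := le_trans (min_le_right _ _) (min_le_right _ _)
    -- choose δ
    set δ : ℝ := Real.log (1 + ε₁ / (2 * x)) with hδdef
    have hfrac : 0 < ε₁ / (2 * x) := by positivity
    have hδpos : 0 < δ := Real.log_pos (by linarith)
    have hexpδ : Real.exp δ = 1 + ε₁ / (2 * x) := Real.exp_log (by linarith)
    set t : ℝ := Real.log x - Real.log y with ht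
    obtain ⟨s, hsS, hst⟩ := tileS_approx t δ hδpos
    obtain ⟨j, k, hjk⟩ := hsS
    set z : ℝ := (2 ^ j / 3 ^ k) * y with hz
    -- z = x * exp (s - t)
    have h2j : (2:ℝ)^j = Real.exp ((j:ℝ) * Real.log 2) := by
      rw [← Real.log_pow, Real.exp_log (by positivity)]
    have h3k : (3:ℝ)^k = Real.exp ((k:ℝ) * Real.log 3) := by
      rw [← Real.log_pow, Real.exp_log (by positivity)]
    have hexps : Real.exp s = 2^j / 3^k := by
      rw [hjk, Real.exp_sub, h2j, h3k]
    have hexpt : Real.exp t = x / y := by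
      rw [ht, Real.exp_sub, Real.exp_log hxpos, Real.exp_log hypos]
    have hzx : z = x * Real.exp (s - t) := by
      rw [hz, Real.exp_sub, hexps, hexpt]
      field_simp
    -- bound |exp (s - t) - 1|
    have hup : Real.exp (s - t) ≤ Real.exp δ := Real.exp_le_exp.mpr (by
      have := (abs_lt.mp hst).2; linarith)
    have hlow : Real.exp (-δ) ≤ Real.exp (s - t) := Real.exp_le_exp.mpr (by
      have := (abs_lt.mp hst).1; linarith)
    have hexpδ1 : 1 < Real.exp δ := by rw [hexpδ]; linarith
    have hinv : Real.exp (-δ) = 1 / Real.exp δ := by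
      rw [Real.exp_neg]; exact inv_eq_one_div _
    have hbound : |Real.exp (s - t) - 1| ≤ Real.exp δ - 1 := by
      rw [abs_le]
      constructor
      · rw [hinv] at hlow
        have hpos := Real.exp_pos δ
        have h1 : (1:ℝ) ≤ Real.exp δ * Real.exp (s - t) := by
          calc (1:ℝ) = Real.exp δ * (1 / Real.exp δ) := by field_simp
          _ ≤ Real.exp δ * Real.exp (s - t) := by nlinarith
        nlinarith [sq_nonneg (Real.exp δ - 1)]
      · linarith
    have hdist : |z - x| ≤ ε₁ / 2 := by
      have : z - x = x * (Real.exp (s - t) - 1) := by rw [hzx]; ring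
      rw [this, abs_mul, abs_of_pos hxpos]
      calc x * |Real.exp (s - t) - 1| ≤ x * (Real.exp δ - 1) :=
        mul_le_mul_of_nonneg_left hbound hxpos.le
      _ = ε₁ / 2 := by rw [hexpδ]; field_simp; ring
    refine ⟨z, ⟨j, k, rfl, ?_, ?_⟩, ?_⟩
    · have := abs_le.mp hdist; linarith [this.1]
    · have := abs_le.mp hdist; linarith [this.2]
    · rw [Real.dist_eq, abs_sub_comm]
      calc |z - x| ≤ ε₁ / 2 := hdist
      _ < ε₁ := by linarith
      _ ≤ ε := hε₁ε
  calc Set.Icc (1:ℝ) 3 = closure (Ioo (1:ℝ) 3) := (closure_Ioo (by norm_num)).symm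
  _ ⊆ closure (closure T) := closure_mono hmain
  _ = closure T := closure_closure
end
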